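/- arXiv:0805.0274 — 6 statements merged into one kernel-verified Lean document; each statement's English description precedes it below -/
import Mathlib

section
/- On the homogeneous time scale T = cℤ (c > 0), the nabla-derivative of the delta-monomial satisfies [h_{k+1}(t,t₀)]^∇ = Σ_{j=0}^{k} (−1)^j c^j h_{k−j}(t,t₀), where the nabla-derivative is f^∇(t) = (f(t) − f(t−c))/c. -/
open Finset

/-- Delta monomial on cℤ in closed form. -/
noncomputable def hMono (c : ℝ) (k : ℕ) (t t₀ : ℝ) : ℝ :=
  c ^ k * (descPochhammer ℝ k).eval ((t - t₀) / c) / (Nat.factorial k : ℝ)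

lemma key_sum (y : ℝ) (k : ℕ) :
    (descPochhammer ℝ k).eval (y - 1) / (Nat.factorial k : ℝ)
      = ∑ j ∈ Finset.range (k + 1),
          (-1 : ℝ) ^ j * (descPochhammer ℝ (k - j)).eval y / (Nat.factorial (k - j) : ℝ) := by
  induction k with
  | zero => simp
  | succ k ih =>
    rw [Finset.sum_range_succ']
    have h1 : ∀ i ∈ Finset.range (k + 1),
        (-1 : ℝ) ^ (i + 1) * (descPochhammer ℝ (k + 1 - (i + 1))).eval y
          / (Nat.factorial (k + 1 - (i + 1)) : ℝ)
        = -((-1 : ℝ) ^ i * (descPochhammer ℝ (k - i)).eval y / (Nat.factorial (k - i) : ℝ)) := by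
      intro i _
      simp [pow_succ, Nat.succ_sub_succ]
      ring
    rw [Finset.sum_congr rfl h1, Finset.sum_neg_distrib, ← ih]
    have h1 : (descPochhammer ℝ (k + 1)).eval y = y * (descPochhammer ℝ k).eval (y - 1) := by
      rw [descPochhammer_succ_left]; simp [Polynomial.eval_comp]
    have h2 : (descPochhammer ℝ (k + 1)).eval (y - 1)
        = (descPochhammer ℝ k).eval (y - 1) * (y - 1 - k) := descPochhammer_succ_eval k (y - 1)
    have hdiff : (descPochhammer ℝ (k + 1)).eval (y - 1)
        = (descPochhammer ℝ (k + 1)).eval y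
          - (k + 1 : ℝ) * (descPochhammer ℝ k).eval (y - 1) := by
      rw [h1, h2]; ring
    rw [hdiff]
    have hk : (Nat.factorial k : ℝ) ≠ 0 := Nat.cast_ne_zero.mpr (Nat.factorial_ne_zero k)
    have hk1 : (Nat.factorial (k + 1) : ℝ) ≠ 0 := Nat.cast_ne_zero.mpr (Nat.factorial_ne_zero _)
    have hfac : (Nat.factorial (k + 1) : ℝ) = (k + 1 : ℝ) * Nat.factorial k := by
      rw [Nat.factorial_succ]; push_cast; ring
    simp only [Nat.sub_zero, pow_zero, one_mul, hfac]
    field_simp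
    ring

/-- On T = cℤ, the nabla-derivative f^∇(t) = (f(t) − f(t−c))/c of the delta monomial
satisfies [h_{k+1}(t,t₀)]^∇ = Σ_{j=0}^{k} (−1)^j c^j h_{k−j}(t,t₀).
Points t = c·m, t₀ = c·n. -/
theorem stmt6 (c : ℝ) (hc : 0 < c) (k : ℕ) (m n : ℤ) :
    (hMono c (k + 1) (c * m) (c * n) - hMono c (k + 1) (c * m - c) (c * n)) / c
      = ∑ j ∈ Finset.range (k + 1),
          (-1 : ℝ) ^ j * c ^ j * hMono c (k - j) (c * m) (c * n) := by
  have hc0 : c ≠ 0 := hc.ne'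
  set y : ℝ := (m : ℝ) - n with hy
  have harg1 : (c * m - c * n) / c = y := by field_simp; ring
  have harg2 : (c * m - c - c * n) / c = y - 1 := by field_simp; ring
  have h1 : (descPochhammer ℝ (k + 1)).eval y = y * (descPochhammer ℝ k).eval (y - 1) := by
    rw [descPochhammer_succ_left]; simp [Polynomial.eval_comp]
  have h2 : (descPochhammer ℝ (k + 1)).eval (y - 1)
      = (descPochhammer ℝ k).eval (y - 1) * (y - 1 - k) := descPochhammer_succ_eval k (y - 1)
  have hdiff : (descPochhammer ℝ (k + 1)).eval y - (descPochhammer ℝ (k + 1)).eval (y - 1)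
      = (k + 1 : ℝ) * (descPochhammer ℝ k).eval (y - 1) := by
    rw [h1, h2]; ring
  have hfac : (Nat.factorial (k + 1) : ℝ) = (k + 1 : ℝ) * Nat.factorial k := by
    rw [Nat.factorial_succ]; push_cast; ring
  have hk : (Nat.factorial k : ℝ) ≠ 0 := Nat.cast_ne_zero.mpr (Nat.factorial_ne_zero k)
  have hk1 : ((k : ℝ) + 1) ≠ 0 := by positivity
  have lhs_eq : (hMono c (k + 1) (c * m) (c * n) - hMono c (k + 1) (c * m - c) (c * n)) / c
      = c ^ k * ((descPochhammer ℝ k).eval (y - 1) / (Nat.factorial k : ℝ)) := by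
    unfold hMono
    rw [harg1, harg2, hfac]
    field_simp
    rw [hdiff]
    ring
  rw [lhs_eq, key_sum y k]
  rw [Finset.mul_sum]
  apply Finset.sum_congr rfl
  intro j hj
  have hjk : j ≤ k := Nat.lt_succ_iff.mp (Finset.mem_range.mp hj)
  unfold hMono
  rw [harg1]
  have : c ^ j * c ^ (k - j) = c ^ k := by
    rw [← pow_add, Nat.add_sub_cancel' hjk]
  field_simp
  rw [← this]
  ring
end

section
/- On the homogeneous time scale T = cℤ (c > 0), the delta-derivative of the nabla-monomial satisfies [ĥ_{k+1}(t,t₀)]^Δ = Σ_{j=0}^{k} c^j ĥ_{k−j}(t,t₀), where f^Δ(t) = (f(t+c) − f(t))/c. -/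
open Finset

/-- Nabla monomial on cℤ in closed form. -/
noncomputable def hHatMono (c : ℝ) (k : ℕ) (t t₀ : ℝ) : ℝ :=
  c ^ k * (ascPochhammer ℝ k).eval ((t - t₀) / c) / (Nat.factorial k : ℝ)

lemma aux1 (x : ℝ) (k : ℕ) :
    (ascPochhammer ℝ (k+1)).eval (x+1)
      = ((k:ℝ)+1) * (ascPochhammer ℝ k).eval (x+1) + (ascPochhammer ℝ (k+1)).eval x := by
  have e1 : (ascPochhammer ℝ (k+1)).eval (x+1)
      = (ascPochhammer ℝ k).eval (x+1) * (x + 1 + k) := by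
    rw [ascPochhammer_succ_right]; simp [Polynomial.eval_mul]
  have e2 : (ascPochhammer ℝ (k+1)).eval x = x * (ascPochhammer ℝ k).eval (x+1) := by
    rw [ascPochhammer_succ_left]; simp [Polynomial.eval_mul, Polynomial.eval_comp]
  rw [e1, e2]; ring

lemma aux2 (x : ℝ) (k : ℕ) :
    (ascPochhammer ℝ k).eval (x+1) / (Nat.factorial k : ℝ)
      = ∑ i ∈ Finset.range (k+1), (ascPochhammer ℝ i).eval x / (Nat.factorial i : ℝ) := by
  induction k with
  | zero => simp
  | succ k ih =>
    rw [Finset.sum_range_succ, ← ih, aux1]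
    have hk : (Nat.factorial k : ℝ) ≠ 0 := by positivity
    have hk1 : (Nat.factorial (k+1) : ℝ) ≠ 0 := by positivity
    rw [Nat.factorial_succ]
    push_cast
    field_simp

lemma aux3 (c x : ℝ) (hc : c ≠ 0) (k : ℕ) :
    (c ^ (k+1) * (ascPochhammer ℝ (k+1)).eval (x+1) / (Nat.factorial (k+1) : ℝ)
      - c ^ (k+1) * (ascPochhammer ℝ (k+1)).eval x / (Nat.factorial (k+1) : ℝ)) / c
      = c ^ k * ((ascPochhammer ℝ k).eval (x+1) / (Nat.factorial k : ℝ)) := by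
  have hk : (Nat.factorial k : ℝ) ≠ 0 := by positivity
  have key := aux1 x k
  rw [Nat.factorial_succ]
  push_cast
  field_simp
  linear_combination c ^ (k+1) * key

/-- On T = cℤ, the delta-derivative f^Δ(t) = (f(t+c) − f(t))/c of the nabla monomial
satisfies [ĥ_{k+1}(t,t₀)]^Δ = Σ_{j=0}^{k} c^j ĥ_{k−j}(t,t₀).
Points t = c·m, t₀ = c·n. -/
theorem stmt7 (c : ℝ) (hc : 0 < c) (k : ℕ) (m n : ℤ) :
    (hHatMono c (k + 1) (c * m + c) (c * n) - hHatMono c (k + 1) (c * m) (c * n)) / c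
      = ∑ j ∈ Finset.range (k + 1),
          c ^ j * hHatMono c (k - j) (c * m) (c * n) := by
  have hc' : c ≠ 0 := hc.ne'
  set x : ℝ := (c * m - c * n) / c with hx
  have hx1 : (c * m + c - c * n) / c = x + 1 := by
    rw [hx]
    rw [show (c * (m:ℝ) + c - c * n) = (c * m - c * n) + c by ring, add_div, div_self hc']
  have hR : ∀ j ∈ Finset.range (k+1),
      c ^ j * hHatMono c (k - j) (c * m) (c * n)
        = c ^ k * ((ascPochhammer ℝ (k - j)).eval x / (Nat.factorial (k-j) : ℝ)) := by
    intro j hj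
    have hjk : j ≤ k := Nat.lt_succ_iff.mp (Finset.mem_range.mp hj)
    simp only [hHatMono, ← hx]
    rw [mul_div_assoc, ← mul_assoc, ← pow_add]
    congr 2
    omega
  rw [Finset.sum_congr rfl hR, ← Finset.mul_sum]
  have hrefl : ∑ j ∈ Finset.range (k+1),
      (ascPochhammer ℝ (k - j)).eval x / (Nat.factorial (k-j) : ℝ)
      = ∑ i ∈ Finset.range (k+1), (ascPochhammer ℝ i).eval x / (Nat.factorial i : ℝ) := by
    rw [← Finset.sum_range_reflect]
    apply Finset.sum_congr rfl
    intro i hi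
    have h : k - (k + 1 - 1 - i) = i := by
      have : i ≤ k := Nat.lt_succ_iff.mp (Finset.mem_range.mp hi)
      omega
    rw [h]
  rw [hrefl, ← aux2]
  simp only [hHatMono, hx1, ← hx]
  exact aux3 c x hc' k
end

section
/- On T = cℤ (c > 0), the diamond-α derivative of the delta-monomial h_{k+1} satisfies h_{k+1}^{◇α}(t,t₀) = h_k(t,t₀) + (1−α)·Σ_{j=1}^{k} (−1)^j c^j h_{k−j}(t,t₀), for every α ∈ [0,1]. -/
open Finset

lemma descP_succ_eval_left (k : ℕ) (x : ℝ) :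
    (descPochhammer ℝ (k + 1)).eval x = x * (descPochhammer ℝ k).eval (x - 1) := by
  rw [descPochhammer_succ_left]
  simp [Polynomial.eval_comp]

lemma descP_diff (k : ℕ) (x : ℝ) :
    (descPochhammer ℝ (k + 1)).eval (x + 1) - (descPochhammer ℝ (k + 1)).eval x
      = (k + 1) * (descPochhammer ℝ k).eval x := by
  rw [descP_succ_eval_left, descPochhammer_succ_eval]
  ring_nf

lemma hMono_delta (c : ℝ) (hc : c ≠ 0) (k : ℕ) (t t₀ : ℝ) :
    hMono c (k + 1) (t + c) t₀ - hMono c (k + 1) t t₀ = c * hMono c k t t₀ := by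
  unfold hMono
  have h1 : (t + c - t₀) / c = (t - t₀) / c + 1 := by field_simp; ring
  rw [h1, div_sub_div_same, ← mul_sub, descP_diff]
  rw [Nat.factorial_succ]
  push_cast
  field_simp
  ring

lemma hMono_nabla (c : ℝ) (hc : c ≠ 0) (k : ℕ) (t t₀ : ℝ) :
    hMono c (k + 1) t t₀ - hMono c (k + 1) (t - c) t₀ = c * hMono c k (t - c) t₀ := by
  have h1 : (t - c - t₀) / c = (t - t₀) / c - 1 := by field_simp; ring
  unfold hMono
  rw [h1]
  have h2 : (descPochhammer ℝ (k + 1)).eval ((t - t₀) / c)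
      - (descPochhammer ℝ (k + 1)).eval ((t - t₀) / c - 1)
      = (k + 1) * (descPochhammer ℝ k).eval ((t - t₀) / c - 1) := by
    have := descP_diff k ((t - t₀) / c - 1)
    simpa using this
  rw [div_sub_div_same, ← mul_sub, h2, Nat.factorial_succ]
  push_cast
  field_simp
  ring

lemma hMono_shift (c : ℝ) (hc : c ≠ 0) (k : ℕ) (t t₀ : ℝ) :
    hMono c k (t - c) t₀ = hMono c k t t₀
      + ∑ j ∈ Finset.Icc 1 k, (-1 : ℝ) ^ j * c ^ j * hMono c (k - j) t t₀ := by
  induction k with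
  | zero => simp [hMono]
  | succ k ih =>
    have hrec := hMono_nabla c hc k t t₀
    have hstep : hMono c (k + 1) (t - c) t₀
        = hMono c (k + 1) t t₀ - c * hMono c k (t - c) t₀ := by linarith
    rw [hstep, ih]
    have hL : ∑ j ∈ Finset.Icc 1 (k + 1), (-1 : ℝ) ^ j * c ^ j * hMono c (k + 1 - j) t t₀
        = ∑ i ∈ Finset.range (k + 1),
            (-1 : ℝ) ^ (i + 1) * c ^ (i + 1) * hMono c (k - i) t t₀ := by
      rw [← Finset.Ico_add_one_right_eq_Icc, Finset.sum_Ico_eq_sum_range]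
      apply Finset.sum_congr rfl
      intro i _
      have h3 : k + 1 - (1 + i) = k - i := by omega
      rw [h3, add_comm 1 i]
    have hR : ∑ j ∈ Finset.Icc 1 k, (-1 : ℝ) ^ j * c ^ j * hMono c (k - j) t t₀
        = ∑ i ∈ Finset.range k,
            (-1 : ℝ) ^ (i + 1) * c ^ (i + 1) * hMono c (k - (i + 1)) t t₀ := by
      rw [← Finset.Ico_add_one_right_eq_Icc, Finset.sum_Ico_eq_sum_range]
      apply Finset.sum_congr rfl
      intro i _
      rw [add_comm 1 i]
    rw [hL, hR, Finset.sum_range_succ']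
    have e : ∀ i ∈ Finset.range k,
        (-1 : ℝ) ^ (i + 1 + 1) * c ^ (i + 1 + 1) * hMono c (k - (i + 1)) t t₀
        = -(c * ((-1 : ℝ) ^ (i + 1) * c ^ (i + 1) * hMono c (k - (i + 1)) t t₀)) := by
      intro i _
      ring
    rw [Finset.sum_congr rfl e, Finset.sum_neg_distrib, ← Finset.mul_sum]
    simp only [Nat.sub_zero, pow_one, zero_add]
    ring

/-- On T = cℤ, the diamond-α derivative f^{◇α}(t) = α(f(t+c)−f(t))/c + (1−α)(f(t)−f(t−c))/c
of the delta monomial satisfies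
h_{k+1}^{◇α}(t,t₀) = h_k(t,t₀) + (1−α)·Σ_{j=1}^{k} (−1)^j c^j h_{k−j}(t,t₀).
Points t = c·m, t₀ = c·n. -/
theorem stmt8 (c : ℝ) (hc : 0 < c) (α : ℝ) (hα : α ∈ Set.Icc (0 : ℝ) 1)
    (k : ℕ) (m n : ℤ) :
    α * ((hMono c (k + 1) (c * m + c) (c * n) - hMono c (k + 1) (c * m) (c * n)) / c)
      + (1 - α) *
        ((hMono c (k + 1) (c * m) (c * n) - hMono c (k + 1) (c * m - c) (c * n)) / c)
      = hMono c k (c * m) (c * n)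
        + (1 - α) * ∑ j ∈ Finset.Icc 1 k,
            (-1 : ℝ) ^ j * c ^ j * hMono c (k - j) (c * m) (c * n) := by
  have hc' : c ≠ 0 := ne_of_gt hc
  rw [hMono_delta c hc' k (c * m) (c * n), hMono_nabla c hc' k (c * m) (c * n)]
  rw [mul_div_cancel_left₀ _ hc', mul_div_cancel_left₀ _ hc']
  rw [hMono_shift c hc' k (c * m) (c * n)]
  ring
end

section
/- On T = cℤ (c > 0), the diamond-α derivative of the nabla-monomial ĥ_{k+1} satisfies ĥ_{k+1}^{◇α}(t,t₀) = ĥ_k(t,t₀) + α·Σ_{j=1}^{k} c^j ĥ_{k−j}(t,t₀), for every α ∈ [0,1]. -/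
open Finset

lemma asc_left_eval (k : ℕ) (x : ℝ) :
    (ascPochhammer ℝ (k+1)).eval x = x * (ascPochhammer ℝ k).eval (x+1) := by
  rw [ascPochhammer_succ_left]
  simp [Polynomial.eval_comp]

lemma asc_diff (k : ℕ) (x : ℝ) :
    (ascPochhammer ℝ (k+1)).eval (x+1) - (ascPochhammer ℝ (k+1)).eval x
      = (k+1) * (ascPochhammer ℝ k).eval (x+1) := by
  rw [ascPochhammer_succ_eval, asc_left_eval]
  ring

lemma asc_diff' (k : ℕ) (x : ℝ) :
    (ascPochhammer ℝ (k+1)).eval x - (ascPochhammer ℝ (k+1)).eval (x-1)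
      = (k+1) * (ascPochhammer ℝ k).eval x := by
  have := asc_diff k (x-1)
  simpa using this

lemma hHat_delta (c : ℝ) (hc : c ≠ 0) (k : ℕ) (t t₀ : ℝ) :
    hHatMono c (k+1) (t+c) t₀ - hHatMono c (k+1) t t₀ = c * hHatMono c k (t+c) t₀ := by
  unfold hHatMono
  have hx : (t + c - t₀) / c = (t - t₀) / c + 1 := by field_simp; ring
  rw [hx, ← sub_div, ← mul_sub, asc_diff]
  have hfac : ((k+1).factorial : ℝ) = (k+1) * (k.factorial : ℝ) := by
    push_cast [Nat.factorial_succ]; ring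
  rw [hfac]
  have h1 : ((k : ℝ) + 1) ≠ 0 := by positivity
  have h2 : (k.factorial : ℝ) ≠ 0 := by positivity
  field_simp
  ring

lemma hHat_nabla (c : ℝ) (hc : c ≠ 0) (k : ℕ) (t t₀ : ℝ) :
    hHatMono c (k+1) t t₀ - hHatMono c (k+1) (t-c) t₀ = c * hHatMono c k t t₀ := by
  have := hHat_delta c hc k (t - c) t₀
  simpa using this

lemma hHat_shift (c : ℝ) (hc : c ≠ 0) (k : ℕ) (t t₀ : ℝ) :
    hHatMono c k (t+c) t₀ = ∑ j ∈ Finset.range (k+1), c ^ j * hHatMono c (k - j) t t₀ := by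
  induction k with
  | zero => simp [hHatMono]
  | succ k ih =>
    have hd := hHat_delta c hc k t t₀
    have : hHatMono c (k+1) (t+c) t₀ = hHatMono c (k+1) t t₀ + c * hHatMono c k (t+c) t₀ := by
      linarith
    rw [this, ih, Finset.mul_sum]
    rw [Finset.sum_range_succ' (fun j => c ^ j * hHatMono c (k + 1 - j) t t₀) (k+1)]
    have hcong : ∀ j ∈ Finset.range (k+1),
        c ^ (j+1) * hHatMono c (k + 1 - (j+1)) t t₀
          = c * (c ^ j * hHatMono c (k - j) t t₀) := by
      intro j _; rw [Nat.succ_sub_succ]; ring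
    rw [Finset.sum_congr rfl hcong]
    simp only [Nat.sub_zero, pow_zero, one_mul]
    ring

/-- On T = cℤ, the diamond-α derivative f^{◇α}(t) = α(f(t+c)−f(t))/c + (1−α)(f(t)−f(t−c))/c
of the nabla monomial satisfies
ĥ_{k+1}^{◇α}(t,t₀) = ĥ_k(t,t₀) + α·Σ_{j=1}^{k} c^j ĥ_{k−j}(t,t₀).
Points t = c·m, t₀ = c·n. -/
theorem stmt9 (c : ℝ) (hc : 0 < c) (α : ℝ) (hα : α ∈ Set.Icc (0 : ℝ) 1)
    (k : ℕ) (m n : ℤ) :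
    α * ((hHatMono c (k + 1) (c * m + c) (c * n) - hHatMono c (k + 1) (c * m) (c * n)) / c)
      + (1 - α) *
        ((hHatMono c (k + 1) (c * m) (c * n) - hHatMono c (k + 1) (c * m - c) (c * n)) / c)
      = hHatMono c k (c * m) (c * n)
        + α * ∑ j ∈ Finset.Icc 1 k,
            c ^ j * hHatMono c (k - j) (c * m) (c * n) := by
  have hc' : c ≠ 0 := ne_of_gt hc
  set t := c * (m : ℝ)
  set t₀ := c * (n : ℝ)
  rw [hHat_delta c hc' k t t₀, hHat_nabla c hc' k t t₀]
  rw [mul_div_cancel_left₀ _ hc', mul_div_cancel_left₀ _ hc']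
  have hsum : hHatMono c k (t+c) t₀
      = hHatMono c k t t₀ + ∑ j ∈ Finset.Icc 1 k, c ^ j * hHatMono c (k - j) t t₀ := by
    rw [hHat_shift c hc' k t t₀]
    have : Finset.range (k+1) = insert 0 (Finset.Icc 1 k) := by
      ext j
      simp [Nat.lt_succ_iff, Nat.one_le_iff_ne_zero]
      omega
    rw [this, Finset.sum_insert (by simp)]
    simp
  rw [hsum]
  ring
end

section
/- Let T = cℤ with c > 0, t₀ ∈ cℤ, and let (a_k) and (b_k) be real sequences with all terms nonzero such that lim |a_{k+1}/a_k| < 1/c and lim |b_{k+1}/b_k| < 1/c. Then the combined-polynomial series S_α(t,t₀) = α·Σ_{k=0}^{∞} a_k h_k(t,t₀) + (1−α)·Σ_{k=0}^{∞} b_k ĥ_k(t,t₀) converges (both constituent series converge as real number series) for every t ∈ cℤ and every α ∈ [0,1]. -/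
open Filter

lemma ratio_aux (x : ℝ) : Tendsto (fun k : ℕ => |x + k| / (k + 1 : ℝ)) atTop (nhds 1) := by
  have h1 : Tendsto (fun k : ℕ => (x + k) / (k + 1 : ℝ)) atTop (nhds 1) := by
    have : Tendsto (fun k : ℕ => (x - 1) / (k + 1 : ℝ) + 1) atTop (nhds (0 + 1)) := by
      refine Tendsto.add_const 1 ?_
      have hn : Tendsto (fun k : ℕ => (k : ℝ) + 1) atTop atTop :=
        tendsto_atTop_add_const_right _ 1 (tendsto_natCast_atTop_atTop (R := ℝ))
      exact hn.const_div_atTop _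
    rw [zero_add] at this
    refine this.congr (fun k => ?_)
    have hk : (k : ℝ) + 1 ≠ 0 := by positivity
    field_simp
    ring
  have : Tendsto (fun k : ℕ => |x + k| / (k + 1 : ℝ)) atTop (nhds 1) := by
    refine h1.congr' ?_
    filter_upwards [eventually_ge_atTop (Nat.ceil |x|)] with k hk
    have : 0 ≤ x + k := by
      have := Nat.ceil_le.mp (le_refl (Nat.ceil |x|))
      have h2 : |x| ≤ (k : ℝ) := le_trans (Nat.le_ceil |x|) (by exact_mod_cast hk)
      nlinarith [abs_le.mp (le_refl |x|), neg_abs_le x]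
    rw [abs_of_nonneg this]
  exact this

lemma main_aux (c : ℝ) (hc : 0 < c) (a : ℕ → ℝ) (ha0 : ∀ k, a k ≠ 0) (L : ℝ)
    (hL : Tendsto (fun k : ℕ => |a (k + 1) / a k|) atTop (nhds L)) (hL' : L < 1 / c)
    (g : ℕ → ℝ) (r : ℕ → ℝ) (hg : ∀ k, g (k + 1) = g k * r k)
    (hr : Tendsto (fun k : ℕ => |r k| / (k + 1 : ℝ)) atTop (nhds 1)) :
    Summable (fun k : ℕ => a k * (c ^ k * g k / (Nat.factorial k : ℝ))) := by
  by_cases hz : ∃ k, g k = 0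
  · obtain ⟨k0, hk0⟩ := hz
    have hzero : ∀ j, k0 ≤ j → g j = 0 := by
      intro j hj
      induction j with
      | zero =>
        have : k0 = 0 := Nat.le_zero.mp hj
        rwa [this] at hk0
      | succ j ih =>
        rcases Nat.lt_or_ge k0 (j+1) with h | h
        · rw [hg j, ih (by omega), zero_mul]
        · have : k0 = j + 1 := by omega
          rw [← this]; exact hk0
    apply summable_of_ne_finset_zero (s := Finset.range k0)
    intro k hk
    rw [hzero k (by simpa [Finset.mem_range, not_lt] using hk)]
    ring
  · push_neg at hz
    apply summable_of_ratio_test_tendsto_lt_one (l := c * L)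
    · calc c * L < c * (1 / c) := by exact (mul_lt_mul_iff_right₀ hc).mpr hL'
        _ = 1 := by field_simp
    · filter_upwards with k
      simp only [ne_eq, mul_eq_zero, not_or]
      refine ⟨ha0 k, ?_⟩
      have : (Nat.factorial k : ℝ) ≠ 0 := by positivity
      have hc' : c ^ k ≠ 0 := by positivity
      intro h
      rcases mul_eq_zero.mp (div_eq_zero_iff.mp h |>.resolve_right this) with h | h
      · exact hc' h
      · exact hz k h
    · have key : Tendsto (fun k : ℕ => |a (k+1) / a k| * (c * (|r k| / (k+1 : ℝ)))) atTop
          (nhds (L * (c * 1))) := hL.mul ((hr.const_mul c))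
      rw [show L * (c * 1) = c * L by ring] at key
      refine key.congr (fun k => ?_)
      have hgk : |g k| ≠ 0 := abs_ne_zero.mpr (hz k)
      have hak : |a k| ≠ 0 := abs_ne_zero.mpr (ha0 k)
      have hk1 : (0:ℝ) < (k:ℝ)+1 := by positivity
      have hfk : (0:ℝ) < (Nat.factorial k : ℝ) := by positivity
      rw [Real.norm_eq_abs, Real.norm_eq_abs, hg k, Nat.factorial_succ]
      push_cast
      simp only [abs_mul, abs_div]
      rw [abs_of_pos (pow_pos hc k), abs_of_pos (pow_pos hc (k+1)),
        abs_of_pos hk1, abs_of_pos hfk, pow_succ]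
      field_simp

/-- On T = cℤ: if (a_k), (b_k) have nonzero terms with lim|a_{k+1}/a_k| < 1/c and
lim|b_{k+1}/b_k| < 1/c, then both series of the combined-polynomial series
S_α(t,t₀) = α Σ a_k h_k(t,t₀) + (1−α) Σ b_k ĥ_k(t,t₀) converge for every t ∈ cℤ
and every α ∈ [0,1].  Points t = c·m, t₀ = c·n. -/
theorem stmt14 (c : ℝ) (hc : 0 < c) (n : ℤ) (a b : ℕ → ℝ)
    (ha0 : ∀ k, a k ≠ 0) (hb0 : ∀ k, b k ≠ 0) (La Lb : ℝ)
    (hLa : Tendsto (fun k : ℕ => |a (k + 1) / a k|) atTop (nhds La))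
    (hLa' : La < 1 / c)
    (hLb : Tendsto (fun k : ℕ => |b (k + 1) / b k|) atTop (nhds Lb))
    (hLb' : Lb < 1 / c) :
    ∀ (m : ℤ) (α : ℝ), α ∈ Set.Icc (0 : ℝ) 1 →
      Summable (fun k : ℕ => a k * hMono c k (c * m) (c * n)) ∧
      Summable (fun k : ℕ => b k * hHatMono c k (c * m) (c * n)) := by
  intro m α _
  set x : ℝ := ((c * m : ℝ) - c * n) / c with hx
  constructor
  · have h := main_aux c hc a ha0 La hLa hLa'
      (fun k => (descPochhammer ℝ k).eval x) (fun k => x - k)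
      (fun k => descPochhammer_succ_eval k x)
      (by
        have := ratio_aux (-x)
        refine this.congr (fun k => ?_)
        rw [show |(-x) + k| = |x - k| by rw [← abs_neg]; ring_nf])
    simpa only [hMono, hx] using h
  · have h := main_aux c hc b hb0 Lb hLb hLb'
      (fun k => (ascPochhammer ℝ k).eval x) (fun k => x + k)
      (fun k => ascPochhammer_succ_eval k x)
      (ratio_aux x)
    simpa only [hHatMono, hx] using h
end

section
/- Let M > 0, t₀ ∈ cℤ (c > 0), and (a_k) a real sequence with |a_k| ≤ M^k for all k. Assume cM < 1. Then for every t ∈ cℤ with t − c ≥ t₀, the series F(t) = Σ_{k=0}^{∞} a_k h_k(t,t₀) converges, and its nabla-derivative satisfies F^∇(t) = Σ_{k=0}^{∞} (Σ_{j=0}^{∞} (−1)^j c^j a_{j+k+1}) h_k(t,t₀), where both the inner and outer series converge. -/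
lemma hMono_nat (c : ℝ) (k N : ℕ) (x y : ℝ) (hxy : (x - y) / c = (N : ℝ)) :
    hMono c k x y = c ^ k * (N.choose k : ℝ) := by
  rw [hMono, hxy, descPochhammer_eval_eq_descFactorial,
    Nat.descFactorial_eq_factorial_mul_choose]
  have hk : (Nat.factorial k : ℝ) ≠ 0 := by exact_mod_cast k.factorial_ne_zero
  push_cast
  field_simp

/-- On T = cℤ with |a_k| ≤ M^k and cM < 1: for t − c ≥ t₀, the series
F(t) = Σ_k a_k h_k(t,t₀) converges and its nabla-derivative
(F(t) − F(t−c))/c equals Σ_k (Σ_j (−1)^j c^j a_{j+k+1}) h_k(t,t₀),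
all inner and outer series converging. -/
theorem stmt15 (c M : ℝ) (hc : 0 < c) (hM : 0 < M) (hcM : c * M < 1)
    (n : ℤ) (a : ℕ → ℝ) (ha : ∀ k, |a k| ≤ M ^ k)
    (m : ℤ) (hm : c * (m : ℝ) - c ≥ c * (n : ℝ)) :
    Summable (fun k : ℕ => a k * hMono c k (c * m) (c * n)) ∧
    (∀ k : ℕ, Summable (fun j : ℕ => (-1 : ℝ) ^ j * c ^ j * a (j + k + 1))) ∧
    Summable (fun k : ℕ =>
      (∑' j : ℕ, (-1 : ℝ) ^ j * c ^ j * a (j + k + 1)) * hMono c k (c * m) (c * n)) ∧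
    ((∑' k : ℕ, a k * hMono c k (c * m) (c * n))
        - (∑' k : ℕ, a k * hMono c k (c * m - c) (c * n))) / c
      = ∑' k : ℕ,
          (∑' j : ℕ, (-1 : ℝ) ^ j * c ^ j * a (j + k + 1))
            * hMono c k (c * m) (c * n) := by
  have hc0 : c ≠ 0 := ne_of_gt hc
  -- m ≥ n + 1
  have hmn : n + 1 ≤ m := by
    have h1 : (n : ℝ) ≤ (m : ℝ) - 1 :=
      (mul_le_mul_iff_right₀ hc).mp (by linarith)
    have : ((n + 1 : ℤ) : ℝ) ≤ (m : ℝ) := by push_cast; linarith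
    exact_mod_cast this
  obtain ⟨P, hP⟩ : ∃ P : ℕ, (m - n).toNat = P + 1 :=
    Nat.exists_eq_succ_of_ne_zero (by omega)
  have hNval : (P : ℝ) + 1 = (m : ℝ) - n := by
    have h : (P : ℤ) + 1 = m - n := by omega
    have h2 := congrArg (fun z : ℤ => (z : ℝ)) h
    push_cast at h2
    linarith
  -- closed forms of hMono
  have h1 : ∀ k : ℕ, hMono c k (c * m) (c * n) = c ^ k * ((P + 1).choose k : ℝ) := by
    intro k
    apply hMono_nat
    have hx : c * (m : ℝ) - c * (n : ℝ) = c * (((P + 1 : ℕ) : ℝ)) := by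
      push_cast
      linear_combination (-c) * hNval
    rw [hx, mul_comm, mul_div_assoc, div_self hc0, mul_one]
  have h2 : ∀ k : ℕ, hMono c k (c * m - c) (c * n) = c ^ k * (P.choose k : ℝ) := by
    intro k
    apply hMono_nat
    have hx : c * (m : ℝ) - c - c * (n : ℝ) = c * ((P : ℕ) : ℝ) := by
      linear_combination (-c) * hNval
    rw [hx, mul_comm, mul_div_assoc, div_self hc0, mul_one]
  -- inner summability
  have hinner : ∀ k : ℕ, Summable (fun j : ℕ => (-1 : ℝ) ^ j * c ^ j * a (j + k + 1)) := by
    intro k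
    apply Summable.of_abs
    refine Summable.of_nonneg_of_le (fun j => abs_nonneg _) ?_
      ((summable_geometric_of_lt_one (by positivity) hcM).mul_right (M ^ (k + 1)))
    · intro j
      have hb : |(-1 : ℝ) ^ j * c ^ j * a (j + k + 1)| = c ^ j * |a (j + k + 1)| := by
        rw [abs_mul, abs_mul, abs_pow, abs_pow, abs_neg, abs_one, one_pow, one_mul,
          abs_of_pos hc]
      rw [hb]
      calc c ^ j * |a (j + k + 1)| ≤ c ^ j * M ^ (j + k + 1) := by
            exact mul_le_mul_of_nonneg_left (ha _) (by positivity)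
        _ = (c * M) ^ j * M ^ (k + 1) := by rw [mul_pow, pow_add]; ring
  -- the inner sums
  set b : ℕ → ℝ := fun k => ∑' j : ℕ, (-1 : ℝ) ^ j * c ^ j * a (j + k + 1) with hbdef
  have hb_rec : ∀ k : ℕ, a (k + 1) = b k + c * b (k + 1) := by
    intro k
    have h0 := Summable.tsum_eq_zero_add (hinner k)
    have hsh : (fun j : ℕ => (-1 : ℝ) ^ (j + 1) * c ^ (j + 1) * a (j + 1 + k + 1))
        = fun j : ℕ => (-c) * ((-1 : ℝ) ^ j * c ^ j * a (j + (k + 1) + 1)) := by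
      funext j
      have : j + 1 + k + 1 = j + (k + 1) + 1 := by omega
      rw [this]; ring
    rw [hsh, tsum_mul_left] at h0
    simp only [pow_zero, one_mul, Nat.zero_add] at h0
    have h3 : b k = a (k + 1) + -c * b (k + 1) := h0
    rw [h3]; ring
  -- outer summability (finite support)
  have houtsupp : ∀ (f : ℕ → ℝ), ∀ k ∉ Finset.range (P + 2),
      f k * hMono c k (c * m) (c * n) = 0 := by
    intro f k hk
    rw [h1 k, Nat.choose_eq_zero_of_lt (by simp at hk; omega)]
    simp
  have hout1 : Summable (fun k : ℕ => a k * hMono c k (c * m) (c * n)) :=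
    summable_of_ne_finset_zero (s := Finset.range (P + 2)) (houtsupp a)
  have hout2 : Summable (fun k : ℕ => b k * hMono c k (c * m) (c * n)) :=
    summable_of_ne_finset_zero (s := Finset.range (P + 2)) (houtsupp b)
  refine ⟨hout1, hinner, hout2, ?_⟩
  -- evaluate the tsums as finite sums
  have ht1 : (∑' k : ℕ, a k * hMono c k (c * m) (c * n))
      = ∑ k ∈ Finset.range (P + 2), a k * (c ^ k * ((P + 1).choose k : ℝ)) := by
    rw [tsum_eq_sum (houtsupp a)]
    exact Finset.sum_congr rfl fun k _ => by rw [h1]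
  have ht2 : (∑' k : ℕ, a k * hMono c k (c * m - c) (c * n))
      = ∑ k ∈ Finset.range (P + 2), a k * (c ^ k * (P.choose k : ℝ)) := by
    rw [tsum_eq_sum (s := Finset.range (P + 2))]
    · exact Finset.sum_congr rfl fun k _ => by rw [h2]
    · intro k hk
      rw [h2 k, Nat.choose_eq_zero_of_lt (by simp at hk; omega)]
      simp
  have ht3 : (∑' k : ℕ, b k * hMono c k (c * m) (c * n))
      = ∑ k ∈ Finset.range (P + 2), b k * (c ^ k * ((P + 1).choose k : ℝ)) := by
    rw [tsum_eq_sum (houtsupp b)]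
    exact Finset.sum_congr rfl fun k _ => by rw [h1]
  rw [ht1, ht2, ht3]
  -- the finite combinatorial identity
  have key1 : (∑ k ∈ Finset.range (P + 2), a k * (c ^ k * ((P + 1).choose k : ℝ)))
      - (∑ k ∈ Finset.range (P + 2), a k * (c ^ k * (P.choose k : ℝ)))
      = c * ∑ k ∈ Finset.range (P + 1), a (k + 1) * (c ^ k * (P.choose k : ℝ)) := by
    rw [← Finset.sum_sub_distrib]
    rw [Finset.sum_range_succ' (fun k => a k * (c ^ k * ((P + 1).choose k : ℝ))
      - a k * (c ^ k * (P.choose k : ℝ))) (P + 1)]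
    simp only [pow_zero, Nat.choose_zero_right, Nat.cast_one, mul_one, sub_self, add_zero]
    rw [Finset.mul_sum]
    refine Finset.sum_congr rfl fun k _ => ?_
    rw [Nat.choose_succ_succ (P) (k)]
    push_cast
    ring
  rw [key1, mul_div_cancel_left₀ _ hc0]
  have key2 : ∑ k ∈ Finset.range (P + 1), a (k + 1) * (c ^ k * (P.choose k : ℝ))
      = (∑ k ∈ Finset.range (P + 1), b k * (c ^ k * (P.choose k : ℝ)))
        + ∑ k ∈ Finset.range (P + 1), b (k + 1) * (c ^ (k + 1) * (P.choose k : ℝ)) := by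
    rw [← Finset.sum_add_distrib]
    refine Finset.sum_congr rfl fun k _ => ?_
    rw [hb_rec k]; ring
  have key3 : ∑ k ∈ Finset.range (P + 2), b k * (c ^ k * ((P + 1).choose k : ℝ))
      = b 0 + ∑ k ∈ Finset.range (P + 1),
          b (k + 1) * (c ^ (k + 1) * ((P.choose k : ℝ) + (P.choose (k + 1) : ℝ))) := by
    rw [Finset.sum_range_succ' (fun k => b k * (c ^ k * ((P + 1).choose k : ℝ))) (P + 1)]
    simp only [pow_zero, Nat.choose_zero_right, Nat.cast_one, mul_one]
    rw [add_comm]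
    congr 1
    refine Finset.sum_congr rfl fun k _ => ?_
    rw [Nat.choose_succ_succ]
    push_cast
    ring
  have key4 : ∑ k ∈ Finset.range (P + 1), b (k + 1) * (c ^ (k + 1) * (P.choose (k + 1) : ℝ))
      = (∑ k ∈ Finset.range (P + 1), b k * (c ^ k * (P.choose k : ℝ))) - b 0 := by
    have hh := Finset.sum_range_succ' (fun k => b k * (c ^ k * (P.choose k : ℝ))) (P + 1)
    have hlast : b (P + 1) * (c ^ (P + 1) * (P.choose (P + 1) : ℝ)) = 0 := by
      rw [Nat.choose_eq_zero_of_lt (by omega)]; simp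
    rw [Finset.sum_range_succ, hlast, add_zero] at hh
    simp only [pow_zero, Nat.choose_zero_right, Nat.cast_one, mul_one] at hh
    linarith [hh]
  rw [key2, key3]
  have hsplit : ∑ k ∈ Finset.range (P + 1),
        b (k + 1) * (c ^ (k + 1) * ((P.choose k : ℝ) + (P.choose (k + 1) : ℝ)))
      = (∑ k ∈ Finset.range (P + 1), b (k + 1) * (c ^ (k + 1) * (P.choose k : ℝ)))
        + ∑ k ∈ Finset.range (P + 1), b (k + 1) * (c ^ (k + 1) * (P.choose (k + 1) : ℝ)) := by
    rw [← Finset.sum_add_distrib]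
    exact Finset.sum_congr rfl fun k _ => by ring
  rw [hsplit, key4]
  ring
end
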